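/- Let Γ denote the complex Gamma function and let h : ℝ → ℂ be measurable with |h(u)| ≤ C₁(1 + |u|)^{−3} for all u ∈ ℝ. Then there exists C > 0 such that for all t ∈ ℝ, | ∫_ℝ h(t − r) (Γ′/Γ)(1 + ir) dr | ≤ C · log(4 + |t|). -/

import Mathlib

open Real MeasureTheory Complex

private lemma Gamma_diff {z : ℂ} (hz : 0 < z.re) : DifferentiableAt ℂ Complex.Gamma z := by
  refine Complex.differentiableAt_Gamma z (fun m h => ?_)
  rw [h] at hz
  simp only [Complex.neg_re, Complex.natCast_re] at hz
  have : (0:ℝ) ≤ (m:ℝ) := Nat.cast_nonneg m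
  linarith

private lemma Gamma_ne {z : ℂ} (hz : 0 < z.re) : Complex.Gamma z ≠ 0 := by
  refine Complex.Gamma_ne_zero (fun m h => ?_)
  rw [h] at hz
  simp only [Complex.neg_re, Complex.natCast_re] at hz
  have : (0:ℝ) ≤ (m:ℝ) := Nat.cast_nonneg m
  linarith

/-- Recurrence for digamma: `ψ(z+1) = ψ(z) + 1/z`. -/
private lemma psi_rec {z : ℂ} (hz : 0 < z.re) :
    logDeriv Complex.Gamma (z + 1) = logDeriv Complex.Gamma z + 1 / z := by
  have hz0 : z ≠ 0 := by
    intro h; rw [h] at hz; simp at hz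
  have heq : (fun w : ℂ => Complex.Gamma (w + 1)) =ᶠ[nhds z] fun w => w * Complex.Gamma w := by
    filter_upwards [isOpen_ne.mem_nhds hz0] with w hw
    exact Complex.Gamma_add_one w hw
  have h1 : logDeriv (fun w : ℂ => Complex.Gamma (w + 1)) z
      = logDeriv (fun w : ℂ => w * Complex.Gamma w) z := by
    rw [logDeriv_apply, logDeriv_apply, heq.deriv_eq, heq.eq_of_nhds]
  have h2 : logDeriv (fun w : ℂ => Complex.Gamma (w + 1)) z
      = logDeriv Complex.Gamma (z + 1) := by
    have := logDeriv_comp (f := Complex.Gamma) (g := fun w : ℂ => w + 1) (x := z)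
      (Gamma_diff (by simp only [Complex.add_re, Complex.one_re]; linarith))
      (differentiable_id.add_const 1).differentiableAt
    simp only [Function.comp_def, deriv_add_const, deriv_id'', mul_one] at this
    exact this
  have h3 : logDeriv (fun w : ℂ => w * Complex.Gamma w) z
      = logDeriv Complex.Gamma z + 1 / z := by
    rw [logDeriv_mul (f := fun w : ℂ => w) (g := Complex.Gamma) z hz0 (Gamma_ne hz)
      differentiableAt_fun_id (Gamma_diff hz)]
    simp [logDeriv_id', add_comm]
  rw [← h2, h1, h3]

/-- Legendre duplication for digamma. -/
private lemma psi_dup {z : ℂ} (hz : 0 < z.re) :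
    logDeriv Complex.Gamma z + logDeriv Complex.Gamma (z + 1/2)
      = 2 * logDeriv Complex.Gamma (2 * z) - 2 * (Real.log 2 : ℂ) := by
  have hz2 : 0 < (z + 1/2).re := by
    simp only [Complex.add_re]
    norm_num
    linarith
  have h2z : 0 < (2 * z).re := by
    simp only [Complex.mul_re]
    norm_num
    linarith
  -- LHS as logDeriv of product
  have hL : logDeriv (fun w : ℂ => Complex.Gamma w * Complex.Gamma (w + 1/2)) z
      = logDeriv Complex.Gamma z + logDeriv Complex.Gamma (z + 1/2) := by
    have hcomp : logDeriv (fun w : ℂ => Complex.Gamma (w + 1/2)) z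
        = logDeriv Complex.Gamma (z + 1/2) := by
      have := logDeriv_comp (f := Complex.Gamma) (g := fun w : ℂ => w + 1/2) (x := z)
        (Gamma_diff hz2) (differentiable_id.add_const _).differentiableAt
      simp only [Function.comp_def, deriv_add_const, deriv_id'', mul_one] at this
      exact this
    rw [logDeriv_mul z (Gamma_ne hz) ?_ (Gamma_diff hz) ?_, hcomp]
    · exact Gamma_ne hz2
    · exact (Gamma_diff hz2).comp z (differentiable_id.add_const _).differentiableAt
  -- RHS pieces
  have hE : (fun w : ℂ => (2:ℂ) ^ (1 - 2*w)) = fun w : ℂ => Complex.exp (Complex.log 2 * (1 - 2*w)) := by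
    funext w
    exact Complex.cpow_def_of_ne_zero two_ne_zero _
  have hEderiv : ∀ w : ℂ, HasDerivAt (fun w : ℂ => (2:ℂ) ^ (1 - 2*w))
      ((2:ℂ) ^ (1 - 2*w) * (Complex.log 2 * (-2))) w := by
    intro w
    rw [hE]
    have hlin : HasDerivAt (fun w : ℂ => Complex.log 2 * (1 - 2*w)) (Complex.log 2 * (-2)) w := by
      have : HasDerivAt (fun w : ℂ => 1 - 2*w) (-2 : ℂ) w := by
        simpa using ((hasDerivAt_id w).const_mul (2:ℂ)).const_sub 1
      exact this.const_mul (Complex.log 2)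
    have := hlin.cexp
    rw [Complex.cpow_def_of_ne_zero two_ne_zero]
    exact this
  have hEne : ∀ w : ℂ, (2:ℂ) ^ (1 - 2*w) ≠ 0 := by
    intro w
    rw [Complex.cpow_def_of_ne_zero (two_ne_zero : (2:ℂ) ≠ 0)]
    exact Complex.exp_ne_zero _
  have hElog : logDeriv (fun w : ℂ => (2:ℂ) ^ (1 - 2*w)) z = -2 * Complex.log 2 := by
    rw [logDeriv_apply, (hEderiv z).deriv, mul_comm, mul_div_assoc, div_self (hEne z), mul_one]
    ring
  have hGcomp : logDeriv (fun w : ℂ => Complex.Gamma (2 * w)) z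
      = 2 * logDeriv Complex.Gamma (2 * z) := by
    have := logDeriv_comp (f := Complex.Gamma) (g := fun w : ℂ => 2 * w) (x := z)
      (Gamma_diff h2z) ((differentiable_id.const_mul (2:ℂ)).differentiableAt)
    simp only [Function.comp_def] at this
    rw [this, deriv_const_mul _ differentiableAt_id, deriv_id'']
    ring
  have hR : logDeriv (fun w : ℂ => Complex.Gamma (2*w) * (2:ℂ) ^ (1 - 2*w) * (√π : ℂ)) z
      = 2 * logDeriv Complex.Gamma (2 * z) + (-2 * Complex.log 2) := by
    rw [logDeriv_mul_const _ _ (Complex.ofReal_ne_zero.mpr (by positivity : (√π : ℝ) ≠ 0)),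
      logDeriv_mul (f := fun w : ℂ => Complex.Gamma (2*w)) (g := fun w : ℂ => (2:ℂ) ^ (1 - 2*w))
        z (Gamma_ne h2z) (hEne z)
        ((Gamma_diff h2z).comp z ((differentiable_id.const_mul (2:ℂ)).differentiableAt))
        (hEderiv z).differentiableAt,
      hGcomp, hElog]
  have hfeq : (fun w : ℂ => Complex.Gamma w * Complex.Gamma (w + 1/2))
      = fun w : ℂ => Complex.Gamma (2*w) * (2:ℂ) ^ (1 - 2*w) * (√π : ℂ) := by
    funext w
    exact Complex.Gamma_mul_Gamma_add_half w
  have hlog2 : (Real.log 2 : ℂ) = Complex.log 2 := by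
    rw [Complex.ofReal_log (by norm_num : (0:ℝ) ≤ 2)]
    norm_num
  rw [← hL, hfeq, hR, hlog2]
  ring

/-- Base bound on a compact rectangle. -/
private lemma psi_base : ∃ B₀ : ℝ, ∀ z : ℂ, 1 ≤ z.re → z.re ≤ 2 → |z.im| ≤ 1 →
    ‖logDeriv Complex.Gamma z‖ ≤ B₀ := by
  set K : Set ℂ := {z | 1 ≤ z.re ∧ z.re ≤ 2 ∧ |z.im| ≤ 1} with hK
  have hKc : IsCompact K := by
    apply Metric.isCompact_of_isClosed_isBounded
    · have : K = Complex.re ⁻¹' (Set.Icc 1 2) ∩ Complex.im ⁻¹' (Set.Icc (-1) 1) := by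
        ext z
        simp only [hK, Set.mem_setOf_eq, Set.mem_inter_iff, Set.mem_preimage, Set.mem_Icc, abs_le]
        tauto
      rw [this]
      exact (isClosed_Icc.preimage Complex.continuous_re).inter
        (isClosed_Icc.preimage Complex.continuous_im)
    · apply Bornology.IsBounded.subset (Metric.isBounded_closedBall (x := (0:ℂ)) (r := 3))
      intro z hz
      obtain ⟨h1, h2, h3⟩ := hz
      simp only [Metric.mem_closedBall, dist_zero_right]
      calc ‖z‖ ≤ |z.re| + |z.im| := Complex.norm_le_abs_re_add_abs_im z
        _ ≤ 3 := by rw [_root_.abs_of_nonneg (by linarith)]; linarith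
  have hU : IsOpen {z : ℂ | 0 < z.re} := isOpen_lt continuous_const Complex.continuous_re
  have hdOn : DifferentiableOn ℂ Complex.Gamma {z : ℂ | 0 < z.re} :=
    fun z hz => (Gamma_diff hz).differentiableWithinAt
  have hGa : AnalyticOnNhd ℂ Complex.Gamma {z : ℂ | 0 < z.re} := hdOn.analyticOnNhd hU
  have hcont : ContinuousOn (logDeriv Complex.Gamma) K := by
    have hsub : K ⊆ {z : ℂ | 0 < z.re} := fun z hz => by
      obtain ⟨h1, -, -⟩ := hz; exact lt_of_lt_of_le zero_lt_one h1
    have : ContinuousOn (fun z => deriv Complex.Gamma z / Complex.Gamma z) {z : ℂ | 0 < z.re} :=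
      (hGa.deriv.continuousOn).div hGa.continuousOn (fun z hz => Gamma_ne hz)
    exact (this.mono hsub)
  obtain ⟨B₀, hB₀⟩ := hKc.exists_bound_of_continuousOn hcont
  exact ⟨B₀, fun z h1 h2 h3 => hB₀ z ⟨h1, h2, h3⟩⟩

/-- Inductive doubling bound on the strip `1 ≤ Re z ≤ 2`. -/
private lemma psi_strip : ∃ B : ℝ, 0 ≤ B ∧ ∀ n : ℕ, ∀ z : ℂ, 1 ≤ z.re → z.re ≤ 2 →
    |z.im| ≤ 2 ^ n → ‖logDeriv Complex.Gamma z‖ ≤ B + 2 * n := by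
  obtain ⟨B₀, hB₀⟩ := psi_base
  refine ⟨max B₀ 0, le_max_right _ _, fun n => ?_⟩
  induction n with
  | zero =>
    intro z h1 h2 h3
    simp only [pow_zero] at h3
    simpa using (hB₀ z h1 h2 h3).trans (le_max_left _ 0)
  | succ n ih =>
    intro z h1 h2 h3
    by_cases hsmall : |z.im| ≤ 2 ^ n
    · have := ih z h1 h2 hsmall
      have hn : (n:ℝ) ≤ (n+1 : ℕ) := by push_cast; linarith
      push_cast
      push_cast at this
      linarith
    · push_neg at hsmall
      set w : ℂ := z / 2 with hw
      have h2c : (2:ℂ) = ((2:ℝ):ℂ) := by norm_num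
      have hwre : w.re = z.re / 2 := by rw [hw, h2c, Complex.div_ofReal_re]
      have hwim : w.im = z.im / 2 := by rw [hw, h2c, Complex.div_ofReal_im]
      have hwre0 : 0 < w.re := by rw [hwre]; linarith
      have h2w : 2 * w = z := by rw [hw]; ring
      -- duplication at w
      have hdup := psi_dup hwre0
      rw [h2w] at hdup
      -- recurrence at w
      have hrec := psi_rec hwre0
      -- bounds on pieces
      have hpow1 : (1:ℝ) ≤ 2 ^ n := one_le_pow₀ (by norm_num)
      have himw : |w.im| ≤ 2 ^ n := by
        rw [hwim, abs_div]
        rw [pow_succ] at h3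
        rw [_root_.abs_of_nonneg (by norm_num : (0:ℝ) ≤ 2)]
        linarith
      have hb1 : ‖logDeriv Complex.Gamma (w + 1)‖ ≤ max B₀ 0 + 2 * n := by
        apply ih
        · simp only [Complex.add_re, Complex.one_re, hwre]; linarith
        · simp only [Complex.add_re, Complex.one_re, hwre]; linarith
        · simp only [Complex.add_im, Complex.one_im, add_zero]; exact himw
      have hb2 : ‖logDeriv Complex.Gamma (w + 1/2)‖ ≤ max B₀ 0 + 2 * n := by
        apply ih
        · simp only [Complex.add_re, hwre]; norm_num; linarith
        · simp only [Complex.add_re, hwre]; norm_num; linarith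
        · simp only [Complex.add_im, hwim]; norm_num; rw [← hwim]; exact himw
      have hinvw : ‖1 / w‖ ≤ 2 := by
        have himlb : (1:ℝ)/2 < |w.im| := by
          rw [hwim, abs_div, _root_.abs_of_nonneg (by norm_num : (0:ℝ) ≤ 2)]
          have : (1:ℝ) < |z.im| := lt_of_le_of_lt hpow1 hsmall
          linarith
        have hwnorm : (1:ℝ)/2 ≤ ‖w‖ := le_trans himlb.le (Complex.abs_im_le_norm w)
        rw [one_div, norm_inv]
        rw [show (2:ℝ) = ((1:ℝ)/2)⁻¹ by norm_num]
        exact inv_anti₀ (by norm_num) hwnorm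
      -- assemble
      have hψw : ‖logDeriv Complex.Gamma w‖ ≤ max B₀ 0 + 2 * n + 2 := by
        have : logDeriv Complex.Gamma w = logDeriv Complex.Gamma (w + 1) - 1 / w := by
          rw [hrec]; ring
        rw [this]
        calc ‖logDeriv Complex.Gamma (w + 1) - 1 / w‖
            ≤ ‖logDeriv Complex.Gamma (w + 1)‖ + ‖1 / w‖ := norm_sub_le _ _
          _ ≤ max B₀ 0 + 2 * n + 2 := by linarith
      have hlog2 : Real.log 2 ≤ 1 := by
        rw [← Real.exp_le_exp, Real.exp_log (by norm_num : (0:ℝ) < 2)]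
        calc (2:ℝ) ≤ 2.7182818283 := by norm_num
          _ ≤ Real.exp 1 := Real.exp_one_gt_d9.le
      have h2ψz : 2 * ‖logDeriv Complex.Gamma z‖ ≤
          ‖logDeriv Complex.Gamma w‖ + ‖logDeriv Complex.Gamma (w + 1/2)‖ + 2 * Real.log 2 := by
        have : (2:ℂ) * logDeriv Complex.Gamma z
            = logDeriv Complex.Gamma w + logDeriv Complex.Gamma (w + 1/2) + 2 * (Real.log 2 : ℂ) := by
          linear_combination -hdup
        calc 2 * ‖logDeriv Complex.Gamma z‖ = ‖(2:ℂ) * logDeriv Complex.Gamma z‖ := by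
              rw [norm_mul]; norm_num
          _ = ‖logDeriv Complex.Gamma w + logDeriv Complex.Gamma (w + 1/2)
                + 2 * (Real.log 2 : ℂ)‖ := by rw [this]
          _ ≤ ‖logDeriv Complex.Gamma w‖ + ‖logDeriv Complex.Gamma (w + 1/2)‖
                + ‖(2:ℂ) * (Real.log 2 : ℂ)‖ := by
              refine le_trans (norm_add_le _ _) ?_
              gcongr
              exact norm_add_le _ _
          _ ≤ ‖logDeriv Complex.Gamma w‖ + ‖logDeriv Complex.Gamma (w + 1/2)‖
                + 2 * Real.log 2 := by
              rw [norm_mul, Complex.norm_real, Real.norm_eq_abs,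
                _root_.abs_of_nonneg (Real.log_nonneg (by norm_num))]
              norm_num
      push_cast
      linarith

/-- Logarithmic bound for digamma on the line `Re = 1`. -/
private lemma psi_line : ∃ A : ℝ, 1 ≤ A ∧ ∀ r : ℝ,
    ‖logDeriv Complex.Gamma (1 + Complex.I * r)‖ ≤ A * Real.log (4 + |r|) := by
  obtain ⟨B, hB0, hB⟩ := psi_strip
  refine ⟨B + 6, by linarith, fun r => ?_⟩
  have hre : (1 + Complex.I * (r:ℂ)).re = 1 := by simp
  have him : (1 + Complex.I * (r:ℂ)).im = r := by simp
  set n := ⌈Real.logb 2 (max 1 |r|)⌉₊ with hn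
  have hmax : (1:ℝ) ≤ max 1 |r| := le_max_left _ _
  have h2n : |r| ≤ (2:ℝ) ^ n := by
    calc |r| ≤ max 1 |r| := le_max_right _ _
      _ = (2:ℝ) ^ (Real.logb 2 (max 1 |r|)) :=
          (Real.rpow_logb (by norm_num) (by norm_num) (by linarith)).symm
      _ ≤ (2:ℝ) ^ ((n:ℝ)) :=
          Real.rpow_le_rpow_of_exponent_le (by norm_num) (Nat.le_ceil _)
      _ = (2:ℝ) ^ n := by rw [Real.rpow_natCast]
  have hbound := hB n (1 + Complex.I * r) (by rw [hre]) (by rw [hre]; norm_num)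
    (by rw [him]; exact h2n)
  set L := Real.log (4 + |r|) with hL
  have hL4 : Real.log 4 ≤ L := by
    apply Real.log_le_log (by norm_num)
    linarith [abs_nonneg r]
  have hL1 : 1 < L := by
    refine lt_of_lt_of_le ?_ hL4
    rw [Real.lt_log_iff_exp_lt (by norm_num)]
    calc Real.exp 1 < 2.7182818286 := Real.exp_one_lt_d9
      _ < 4 := by norm_num
  have hlog2half : (1:ℝ)/2 ≤ Real.log 2 := by
    have := Real.log_two_gt_d9
    linarith
  have hlog2pos : (0:ℝ) < Real.log 2 := by linarith
  have hnle : (n:ℝ) ≤ L / Real.log 2 + 1 := by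
    have h0 : 0 ≤ Real.logb 2 (max 1 |r|) := Real.logb_nonneg (by norm_num) hmax
    have h1 : (n:ℝ) < Real.logb 2 (max 1 |r|) + 1 := Nat.ceil_lt_add_one h0
    have hml : Real.log (max 1 |r|) ≤ L := by
      apply Real.log_le_log (lt_of_lt_of_le zero_lt_one hmax)
      exact sup_le (by linarith [abs_nonneg r]) (by linarith [abs_nonneg r])
    have h2 : Real.logb 2 (max 1 |r|) ≤ L / Real.log 2 := by
      rw [Real.logb, div_eq_mul_inv, div_eq_mul_inv]
      exact mul_le_mul_of_nonneg_right hml (by positivity)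
    linarith
  have hD2L : L / Real.log 2 ≤ 2 * L := by
    rw [div_le_iff₀ hlog2pos]
    nlinarith
  nlinarith [mul_nonneg hB0 (by linarith : (0:ℝ) ≤ L - 1)]

/-- Convolving a kernel with cubic decay against the digamma function
`Γ'/Γ(1 + ir)` gives a bound `O(log(4 + |t|))`. -/
theorem convolution_digamma_bound (h : ℝ → ℂ)
    (hmeas : Measurable h) (C₁ : ℝ)
    (hdecay : ∀ u : ℝ, ‖h u‖ ≤ C₁ * (1 + |u|) ^ (-3 : ℤ)) :
    ∃ C : ℝ, 0 < C ∧ ∀ t : ℝ,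
      ‖∫ r : ℝ, h (t - r) *
          (deriv Complex.Gamma (1 + Complex.I * r)
            / Complex.Gamma (1 + Complex.I * r))‖
        ≤ C * Real.log (4 + |t|) := by
  obtain ⟨A, hA1, hA⟩ := psi_line
  set C₁' : ℝ := max C₁ 1 with hC₁'
  have hC₁'1 : (1:ℝ) ≤ C₁' := le_max_right _ _
  refine ⟨5 * C₁' * A * π, by positivity, fun t => ?_⟩
  set L := Real.log (4 + |t|) with hLdef
  have hL1 : 1 ≤ L := by
    have : Real.log 4 ≤ L := by
      apply Real.log_le_log (by norm_num)
      linarith [abs_nonneg t]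
    have h4 : 1 < Real.log 4 := by
      rw [Real.lt_log_iff_exp_lt (by norm_num)]
      calc Real.exp 1 < 2.7182818286 := Real.exp_one_lt_d9
        _ < 4 := by norm_num
    linarith
  have hInt : Integrable (fun r : ℝ => (5 * C₁' * A * L) * (1 + (t - r)^2)⁻¹) :=
    (integrable_inv_one_add_sq.comp_sub_left t).const_mul _
  have key : ‖∫ r : ℝ, h (t - r) *
      (deriv Complex.Gamma (1 + Complex.I * r) / Complex.Gamma (1 + Complex.I * r))‖
      ≤ ∫ r : ℝ, (5 * C₁' * A * L) * (1 + (t - r)^2)⁻¹ := by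
    apply MeasureTheory.norm_integral_le_of_norm_le hInt
    apply Filter.Eventually.of_forall
    intro r
    have hψ : ‖deriv Complex.Gamma (1 + Complex.I * r) / Complex.Gamma (1 + Complex.I * r)‖
        ≤ A * Real.log (4 + |r|) := by
      rw [← logDeriv_apply]
      exact hA r
    have hh := hdecay (t - r)
    set u : ℝ := t - r with hu
    have hu0 : (0:ℝ) ≤ |u| := abs_nonneg u
    have hP1 : (1:ℝ) ≤ 1 + |u| := by linarith
    have hz3 : (1 + |u|) ^ (-3 : ℤ) = ((1 + |u|)^3)⁻¹ := by
      rw [zpow_neg]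
      norm_cast
    have hh' : ‖h u‖ ≤ C₁' * ((1 + |u|)^3)⁻¹ := by
      rw [hz3] at hh
      refine hh.trans ?_
      have : (0:ℝ) ≤ ((1 + |u|)^3)⁻¹ := by positivity
      exact mul_le_mul_of_nonneg_right (le_max_left _ _) this
    have hru : |r| ≤ |t| + |u| := by
      have : r = t - u := by rw [hu]; ring
      rw [this, sub_eq_add_neg]
      exact (abs_add_le t (-u)).trans (by rw [abs_neg])
    have key1 : Real.log (4 + |r|) ≤ L + Real.log (4 + |u|) := by
      have hmul : (4 + |r|) ≤ (4 + |t|) * (4 + |u|) := by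
        nlinarith [abs_nonneg t, abs_nonneg u]
      calc Real.log (4 + |r|) ≤ Real.log ((4 + |t|) * (4 + |u|)) :=
            Real.log_le_log (by positivity) hmul
        _ = L + Real.log (4 + |u|) := by
            rw [Real.log_mul (by positivity) (by positivity), hLdef]
    have key2 : Real.log (4 + |u|) ≤ 4 * (1 + |u|) := by
      refine (Real.log_le_self (by positivity)).trans ?_
      linarith
    -- core real inequality
    have hsq : 1 + u^2 ≤ (1 + |u|)^2 := by nlinarith [_root_.sq_abs u]
    have hcube : (1 + |u|)^2 ≤ (1 + |u|)^3 := by nlinarith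
    have hinv3 : ((1 + |u|)^3)⁻¹ ≤ (1 + u^2)⁻¹ := by
      apply inv_anti₀ (by positivity)
      linarith
    have hinv2 : (1 + |u|) * ((1 + |u|)^3)⁻¹ ≤ (1 + u^2)⁻¹ := by
      have heq : (1 + |u|) * ((1 + |u|)^3)⁻¹ = ((1 + |u|)^2)⁻¹ := by
        field_simp
      rw [heq]
      apply inv_anti₀ (by positivity)
      exact hsq
    have hcore : ((1 + |u|)^3)⁻¹ * Real.log (4 + |r|) ≤ 5 * L * (1 + u^2)⁻¹ := by
      have hinvpos : (0:ℝ) ≤ ((1 + |u|)^3)⁻¹ := by positivity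
      have h1 : ((1 + |u|)^3)⁻¹ * Real.log (4 + |r|)
          ≤ ((1 + |u|)^3)⁻¹ * (L + 4 * (1 + |u|)) := by
        apply mul_le_mul_of_nonneg_left _ hinvpos
        linarith
      have h2 : ((1 + |u|)^3)⁻¹ * (L + 4 * (1 + |u|))
          = L * ((1 + |u|)^3)⁻¹ + 4 * ((1 + |u|) * ((1 + |u|)^3)⁻¹) := by ring
      have h3 : L * ((1 + |u|)^3)⁻¹ ≤ L * (1 + u^2)⁻¹ :=
        mul_le_mul_of_nonneg_left hinv3 (by linarith)
      have h4 : 4 * ((1 + |u|) * ((1 + |u|)^3)⁻¹) ≤ 4 * (1 + u^2)⁻¹ := by linarith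
      have h5 : 4 * (1 + u^2)⁻¹ ≤ 4 * L * (1 + u^2)⁻¹ := by
        have : (0:ℝ) ≤ (1 + u^2)⁻¹ := by positivity
        nlinarith
      calc ((1 + |u|)^3)⁻¹ * Real.log (4 + |r|)
          ≤ ((1 + |u|)^3)⁻¹ * (L + 4 * (1 + |u|)) := h1
        _ = L * ((1 + |u|)^3)⁻¹ + 4 * ((1 + |u|) * ((1 + |u|)^3)⁻¹) := h2
        _ ≤ L * (1 + u^2)⁻¹ + 4 * L * (1 + u^2)⁻¹ := by linarith
        _ = 5 * L * (1 + u^2)⁻¹ := by ring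
    have hlogr0 : 0 ≤ Real.log (4 + |r|) := Real.log_nonneg (by linarith [abs_nonneg r])
    calc ‖h u * (deriv Complex.Gamma (1 + Complex.I * r)
            / Complex.Gamma (1 + Complex.I * r))‖
        = ‖h u‖ * ‖deriv Complex.Gamma (1 + Complex.I * r)
            / Complex.Gamma (1 + Complex.I * r)‖ := norm_mul _ _
      _ ≤ (C₁' * ((1 + |u|)^3)⁻¹) * (A * Real.log (4 + |r|)) := by
          apply mul_le_mul hh' hψ (norm_nonneg _)
          positivity
      _ = (C₁' * A) * (((1 + |u|)^3)⁻¹ * Real.log (4 + |r|)) := by ring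
      _ ≤ (C₁' * A) * (5 * L * (1 + u^2)⁻¹) := by
          apply mul_le_mul_of_nonneg_left hcore
          positivity
      _ = (5 * C₁' * A * L) * (1 + (t - r)^2)⁻¹ := by rw [hu]; ring
  rw [MeasureTheory.integral_const_mul] at key
  rw [show (fun r : ℝ => (1 + (t - r)^2)⁻¹) = fun r : ℝ => (fun x : ℝ => (1 + x^2)⁻¹) (t - r)
      from rfl] at key
  rw [MeasureTheory.integral_sub_left_eq_self (fun x : ℝ => (1 + x^2)⁻¹) volume t,
    integral_univ_inv_one_add_sq] at key
  calc ‖∫ r : ℝ, h (t - r) *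
      (deriv Complex.Gamma (1 + Complex.I * r) / Complex.Gamma (1 + Complex.I * r))‖
      ≤ 5 * C₁' * A * L * π := key
    _ = 5 * C₁' * A * π * L := by ring
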